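/- arXiv:2302.12821 — 4 statements merged into one kernel-verified Lean document; each statement's English description precedes it below -/
import Mathlib

section
/- In a quantum state discrimination task with ensemble {ρ_x}_{x∈X} and uniform prior, if p is the optimal success probability over all POVMs, then the Pretty Good Measurement achieves success probability at least p². -/
open scoped BigOperators ComplexOrder

variable {X d : Type*}

namespace PGMAux

open Matrix

variable {d : Type*} [Fintype d] [DecidableEq d] {A : Matrix d d ℂ}

lemma contOn (f : ℝ → ℝ) (A : Matrix d d ℂ) : ContinuousOn f (spectrum ℝ A) := by
  rw [continuousOn_iff_continuous_restrict]; fun_prop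

lemma cfc_mul_cfc (hA : A.IsHermitian) (f g : ℝ → ℝ) :
    hA.cfc f * hA.cfc g = hA.cfc (fun t => f t * g t) := by
  rw [← hA.cfc_eq, ← hA.cfc_eq, ← hA.cfc_eq, ← cfc_mul f g A (contOn f A) (contOn g A)]

lemma cfc_congr_eigs (hA : A.IsHermitian) {f g : ℝ → ℝ}
    (h : ∀ i, f (hA.eigenvalues i) = g (hA.eigenvalues i)) : hA.cfc f = hA.cfc g := by
  rw [← hA.cfc_eq, ← hA.cfc_eq]
  exact cfc_congr fun t ht => by
    obtain ⟨i, rfl⟩ := hA.spectrum_real_eq_range_eigenvalues ▸ ht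
    exact h i

lemma cfc_id_eq (hA : A.IsHermitian) : hA.cfc (fun t => t) = A := by
  rw [← hA.cfc_eq]; exact cfc_id' ℝ A hA

lemma cfc_posSemidef (hA : A.IsHermitian) {f : ℝ → ℝ} (hf : ∀ t, 0 ≤ f t) :
    (hA.cfc f).PosSemidef := by
  rw [Matrix.IsHermitian.cfc]
  have hd : Matrix.PosSemidef
      (Matrix.diagonal (RCLike.ofReal ∘ f ∘ hA.eigenvalues) : Matrix d d ℂ) :=
    Matrix.PosSemidef.diagonal fun i => by
      simpa using Complex.zero_le_real.mpr (hf (hA.eigenvalues i))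
  simpa [Matrix.star_eq_conjTranspose] using hd.mul_mul_conjTranspose_same
    (hA.eigenvectorUnitary : Matrix d d ℂ)

lemma trace_nonneg_of_psd {M : Matrix d d ℂ} (hM : M.PosSemidef) : 0 ≤ M.trace := by
  rw [Matrix.trace]
  refine Finset.sum_nonneg fun i _ => ?_
  have := hM.dotProduct_mulVec_nonneg (Pi.single i 1)
  simpa [Matrix.mulVec_single, dotProduct, Pi.single_apply,
    apply_ite (star : ℂ → ℂ), Finset.sum_ite_eq'] using this

lemma trace_mul_nonneg {M N : Matrix d d ℂ} (hM : M.PosSemidef) (hN : N.PosSemidef) :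
    0 ≤ (M * N).trace := by
  obtain ⟨C, rfl⟩ : ∃ C : Matrix d d ℂ, M = Cᴴ * C := by
    open scoped MatrixOrder in exact CStarAlgebra.nonneg_iff_eq_star_mul_self.mp hM.nonneg
  rw [← Matrix.trace_mul_cycle]
  exact trace_nonneg_of_psd (hN.mul_mul_conjTranspose_same C)

lemma re_nonneg_of_nonneg {z : ℂ} (h : 0 ≤ z) : 0 ≤ z.re := by
  exact_mod_cast (Complex.le_def.mp h).1

noncomputable def hfun : ℝ → ℝ := fun t => if t ≤ 0 then 0 else 1

lemma mul_support_proj (hA : A.IsHermitian) (hApsd : A.PosSemidef)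
    {ρ : Matrix d d ℂ} (hρ : ρ.PosSemidef) (hd : (A - ρ).PosSemidef) :
    ρ * hA.cfc hfun = ρ := by
  set P := hA.cfc hfun with hP
  have hAP : A * P = A := by
    have h1 : hA.cfc (fun t => t) * hA.cfc hfun = hA.cfc (fun t => t) := by
      rw [cfc_mul_cfc]
      refine cfc_congr_eigs hA fun i => ?_
      have h0 : 0 ≤ hA.eigenvalues i := hApsd.eigenvalues_nonneg i
      rcases h0.lt_or_eq with h | h
      · simp [hfun, not_le.mpr h]
      · simp [hfun, ← h]
    rwa [cfc_id_eq hA] at h1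
  have key : ∀ v : d → ℂ, ρ *ᵥ ((1 - P) *ᵥ v) = 0 := by
    intro v
    set w := (1 - P) *ᵥ v with hw
    have h0 : A *ᵥ w = 0 := by
      rw [hw, Matrix.mulVec_mulVec, Matrix.mul_sub, Matrix.mul_one, hAP, sub_self,
        Matrix.zero_mulVec]
    have h1 : star w ⬝ᵥ ρ *ᵥ w ≤ 0 := by
      have := hd.dotProduct_mulVec_nonneg w
      rw [Matrix.sub_mulVec, h0, zero_sub, dotProduct_neg] at this
      exact neg_nonneg.mp this
    exact (hρ.dotProduct_mulVec_zero_iff w).mp (le_antisymm h1 (hρ.dotProduct_mulVec_nonneg w))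
  have hzero : ρ * (1 - P) = 0 := by
    ext i j
    have := congrFun (key (Pi.single j 1)) i
    rw [Matrix.mulVec_mulVec] at this
    simpa [Matrix.mulVec_single] using this
  rw [Matrix.mul_sub, Matrix.mul_one] at hzero
  exact (sub_eq_zero.mp hzero).symm

lemma re_sq_le_norm_sq (z : ℂ) : z.re ^ 2 ≤ ‖z‖ ^ 2 := by
  rw [← Complex.normSq_eq_norm_sq, Complex.normSq_apply]
  nlinarith [sq_nonneg z.im]

lemma cs {ι : Type*} [Fintype ι] (a b : ι → ℂ) :
    (∑ i, (starRingEnd ℂ) (a i) * b i).re ^ 2 ≤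
      (∑ i, (starRingEnd ℂ) (a i) * a i).re * (∑ i, (starRingEnd ℂ) (b i) * b i).re := by
  let u : EuclideanSpace ℂ ι := WithLp.toLp 2 a
  let v : EuclideanSpace ℂ ι := WithLp.toLp 2 b
  have hiv : ∀ w z : EuclideanSpace ℂ ι,
      (inner ℂ w z : ℂ) = ∑ i, (starRingEnd ℂ) (w i) * z i := by
    intro w z
    rw [PiLp.inner_apply]
    simp [RCLike.inner_apply]
    exact Finset.sum_congr rfl fun _ _ => mul_comm _ _
  show (∑ i, (starRingEnd ℂ) (u.ofLp i) * v.ofLp i).re ^ 2 ≤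
    (∑ i, (starRingEnd ℂ) (u.ofLp i) * u.ofLp i).re * (∑ i, (starRingEnd ℂ) (v.ofLp i) * v.ofLp i).re
  rw [← hiv u v, ← hiv u u, ← hiv v v]
  have h2 : ((inner ℂ u u : ℂ)).re = ‖u‖ ^ 2 := by
    exact_mod_cast inner_self_eq_norm_sq (𝕜 := ℂ) u
  have h3 : ((inner ℂ v v : ℂ)).re = ‖v‖ ^ 2 := by
    exact_mod_cast inner_self_eq_norm_sq (𝕜 := ℂ) v
  rw [h2, h3]
  calc ((inner ℂ u v : ℂ)).re ^ 2 ≤ ‖(inner ℂ u v : ℂ)‖ ^ 2 := re_sq_le_norm_sq _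
    _ ≤ (‖u‖ * ‖v‖) ^ 2 := by
        have := norm_inner_le_norm (𝕜 := ℂ) u v
        exact pow_le_pow_left₀ (norm_nonneg _) this 2
    _ = ‖u‖ ^ 2 * (‖v‖ ^ 2) := by ring

lemma entry_sum {d : Type*} [Fintype d] {A B : Matrix d d ℂ} (hA : A.IsHermitian) :
    ∑ i, ∑ j, (starRingEnd ℂ) (A i j) * B i j = (A * B).trace := by
  have h : ∀ i j, (starRingEnd ℂ) (A i j) = A j i := fun i j => hA.apply j i
  simp only [h]
  rw [Finset.sum_comm]
  simp [Matrix.trace, Matrix.mul_apply, Matrix.diag]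

end PGMAux

/-- A POVM (with possibly an extra unlisted outcome): positive semidefinite elements whose
sum is bounded above by the identity. -/
def IsPOVM [Fintype X] [Fintype d] [DecidableEq d] (N : X → Matrix d d ℂ) : Prop :=
  (∀ x, (N x).PosSemidef) ∧ (1 - ∑ x, N x).PosSemidef

/-- Success probability of the measurement `N` at discriminating the ensemble `ρ`
with uniform prior. -/
noncomputable def succProb [Fintype X] [Fintype d] [DecidableEq d]
    (ρ N : X → Matrix d d ℂ) : ℝ :=
  ((Fintype.card X : ℝ))⁻¹ * ∑ x, (Matrix.trace (N x * ρ x)).re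

set_option maxHeartbeats 1600000 in
/-- **The Pretty Good Measurement is optimal up to a quadratic loss.** If `p` is the
optimal success probability over all POVMs at discriminating the ensemble `{ρ_x}` with
uniform prior, then the PGM, whose elements are `σ^{-1/2} ρ_x σ^{-1/2}` with
`σ = Σ_x ρ_x` (pseudoinverse square root), succeeds with probability at least `p²`. -/
theorem pgm_quadratic_optimal [Fintype X] [Fintype d] [DecidableEq d]
    (ρ : X → Matrix d d ℂ)
    (hρ : ∀ x, (ρ x).PosSemidef ∧ Matrix.trace (ρ x) = 1)
    (hσ : (∑ x, ρ x).IsHermitian)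
    (p : ℝ)
    (hp : IsLUB {q : ℝ | ∃ N : X → Matrix d d ℂ, IsPOVM N ∧ q = succProb ρ N} p) :
    p ^ 2 ≤ succProb ρ (fun x =>
      hσ.cfc (fun t => if t ≤ 0 then 0 else (Real.sqrt t)⁻¹) * ρ x *
      hσ.cfc (fun t => if t ≤ 0 then 0 else (Real.sqrt t)⁻¹)) := by
  classical
  open PGMAux Matrix in
  set T := hσ.cfc (fun t => if t ≤ 0 then 0 else (Real.sqrt t)⁻¹) with hT
  set Q := hσ.cfc (fun t => if t ≤ 0 then 0 else Real.sqrt (Real.sqrt t)) with hQ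
  set Q' := hσ.cfc (fun t => if t ≤ 0 then 0 else (Real.sqrt (Real.sqrt t))⁻¹) with hQ'
  set P := hσ.cfc PGMAux.hfun with hPdef
  have hσpsd : (∑ x, ρ x).PosSemidef :=
    Finset.sum_induction _ _ (fun a b ha hb => ha.add hb) Matrix.PosSemidef.zero
      (fun x _ => (hρ x).1)
  have hev : ∀ i, 0 ≤ hσ.eigenvalues i := fun i => hσpsd.eigenvalues_nonneg i
  -- positivity of the cfc elements
  have hQpsd : Q.PosSemidef := cfc_posSemidef hσ fun t => by split <;> positivity
  have hQ'psd : Q'.PosSemidef := cfc_posSemidef hσ fun t => by split <;> positivity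
  have hTpsd : T.PosSemidef := cfc_posSemidef hσ fun t => by split <;> positivity
  have hQH : Qᴴ = Q := hQpsd.1
  have hQ'H : Q'ᴴ = Q' := hQ'psd.1
  have hTH : Tᴴ = T := hTpsd.1
  -- multiplicative identities between the cfc elements
  have hQQ' : Q * Q' = P := by
    rw [hQ, hQ', hPdef, cfc_mul_cfc]
    refine cfc_congr_eigs hσ fun i => ?_
    rcases (hev i).lt_or_eq with h | h
    · have hs : 0 < Real.sqrt (Real.sqrt (hσ.eigenvalues i)) :=
        Real.sqrt_pos.mpr (Real.sqrt_pos.mpr h)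
      simp [PGMAux.hfun, not_le.mpr h, mul_inv_cancel₀ hs.ne']
    · simp [PGMAux.hfun, ← h]
  have hQ'Q : Q' * Q = P := by
    rw [hQ, hQ', hPdef, cfc_mul_cfc]
    refine cfc_congr_eigs hσ fun i => ?_
    rcases (hev i).lt_or_eq with h | h
    · have hs : 0 < Real.sqrt (Real.sqrt (hσ.eigenvalues i)) :=
        Real.sqrt_pos.mpr (Real.sqrt_pos.mpr h)
      simp [PGMAux.hfun, not_le.mpr h, inv_mul_cancel₀ hs.ne']
    · simp [PGMAux.hfun, ← h]
  have hQ'Q' : Q' * Q' = T := by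
    rw [hQ', hT, cfc_mul_cfc]
    refine cfc_congr_eigs hσ fun i => ?_
    rcases (hev i).lt_or_eq with h | h
    · have hs : 0 < Real.sqrt (hσ.eigenvalues i) := Real.sqrt_pos.mpr h
      simp only [not_le.mpr h, if_false]
      rw [← mul_inv, Real.mul_self_sqrt hs.le]
    · simp [← h]
  have hQ4 : Q * (Q * Q) * Q = ∑ x, ρ x := by
    rw [hQ, cfc_mul_cfc, cfc_mul_cfc, cfc_mul_cfc]
    refine Eq.trans ?_ (cfc_id_eq hσ)
    refine cfc_congr_eigs hσ fun i => ?_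
    rcases (hev i).lt_or_eq with h | h
    · set s := Real.sqrt (Real.sqrt (hσ.eigenvalues i)) with hs
      have h1 : s * s = Real.sqrt (hσ.eigenvalues i) :=
        Real.mul_self_sqrt (Real.sqrt_nonneg _)
      have h2 : Real.sqrt (hσ.eigenvalues i) * Real.sqrt (hσ.eigenvalues i) =
          hσ.eigenvalues i := Real.mul_self_sqrt h.le
      simp only [not_le.mpr h, if_false]
      calc s * (s * s) * s = (s * s) * (s * s) := by ring
        _ = _ := by rw [h1, h2]
    · simp [← h]
  -- support projection facts
  have hρP : ∀ x, ρ x * P = ρ x := by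
    intro x
    refine mul_support_proj hσ hσpsd (hρ x).1 ?_
    have hrest : ((Finset.univ.erase x).sum ρ).PosSemidef :=
      Finset.sum_induction _ _ (fun a b ha hb => ha.add hb) Matrix.PosSemidef.zero
        (fun y _ => (hρ y).1)
    have : (∑ y, ρ y) - ρ x = (Finset.univ.erase x).sum ρ :=
      (Finset.sum_erase_eq_sub (Finset.mem_univ x)).symm
    rw [this]; exact hrest
  have hPρ : ∀ x, P * ρ x = ρ x := by
    intro x
    have h := congrArg Matrix.conjTranspose (hρP x)
    rwa [Matrix.conjTranspose_mul, (cfc_posSemidef hσ (f := PGMAux.hfun)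
      (fun t => by unfold PGMAux.hfun; split <;> norm_num)).1, (hρ x).1.1] at h
  -- the key inequality, for an arbitrary POVM
  have key : ∀ N : X → Matrix d d ℂ, IsPOVM N →
      (∑ x, (Matrix.trace (N x * ρ x)).re) ^ 2 ≤
        (Fintype.card X : ℝ) * ∑ x, (Matrix.trace ((T * ρ x * T) * ρ x)).re := by
    rintro N ⟨hN, hNsum⟩
    set A : X → Matrix d d ℂ := fun x => Q * N x * Q with hAdef
    set B : X → Matrix d d ℂ := fun x => Q' * ρ x * Q' with hBdef
    have hApsd : ∀ x, (A x).PosSemidef := fun x => by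
      have := (hN x).mul_mul_conjTranspose_same Q; rwa [hQH] at this
    have hBpsd : ∀ x, (B x).PosSemidef := fun x => by
      have := ((hρ x).1).mul_mul_conjTranspose_same Q'; rwa [hQ'H] at this
    -- (1): trace (A x * B x) = trace (N x * ρ x)
    have h1 : ∀ x, Matrix.trace (A x * B x) = Matrix.trace (N x * ρ x) := by
      intro x
      have e1 : A x * B x = Q * (N x * ρ x) * Q' := by
        have hmid : Q * (Q' * ρ x * Q') = ρ x * Q' := by
          rw [← Matrix.mul_assoc, ← Matrix.mul_assoc, hQQ', hPρ x]
        calc A x * B x = Q * N x * (Q * (Q' * ρ x * Q')) := by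
              simp only [hAdef, hBdef, Matrix.mul_assoc]
          _ = Q * N x * (ρ x * Q') := by rw [hmid]
          _ = Q * (N x * ρ x) * Q' := by simp only [Matrix.mul_assoc]
      rw [e1, Matrix.trace_mul_cycle, hQ'Q, Matrix.trace_mul_comm, Matrix.mul_assoc, hρP x]
    -- (3): trace (B x * B x) = trace ((T ρ T) ρ)
    have h3 : ∀ x, Matrix.trace (B x * B x) = Matrix.trace ((T * ρ x * T) * ρ x) := by
      intro x
      have e3 : B x * B x = Q' * (ρ x * T * ρ x) * Q' := by
        calc B x * B x = Q' * ρ x * ((Q' * Q') * (ρ x * Q')) := by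
              simp only [hBdef, Matrix.mul_assoc]
          _ = Q' * ρ x * (T * (ρ x * Q')) := by rw [hQ'Q']
          _ = Q' * (ρ x * T * ρ x) * Q' := by simp only [Matrix.mul_assoc]
      rw [e3, Matrix.trace_mul_cycle, hQ'Q']
      simp only [Matrix.mul_assoc]
    -- Cauchy–Schwarz
    let a : X × d × d → ℂ := fun z => A z.1 z.2.1 z.2.2
    let b : X × d × d → ℂ := fun z => B z.1 z.2.1 z.2.2
    have hsum : ∀ (U V : X → Matrix d d ℂ), (∀ x, (U x).IsHermitian) →
        ∑ z : X × d × d, (starRingEnd ℂ) (U z.1 z.2.1 z.2.2) * V z.1 z.2.1 z.2.2 =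
          ∑ x, Matrix.trace (U x * V x) := by
      intro U V hU
      rw [Fintype.sum_prod_type]
      refine Finset.sum_congr rfl fun x _ => ?_
      rw [← entry_sum (hU x), Fintype.sum_prod_type]
    have hcs := cs a b
    have ha : ∑ z : X × d × d, (starRingEnd ℂ) (a z) * b z = ∑ x, Matrix.trace (N x * ρ x) := by
      rw [show (∑ z : X × d × d, (starRingEnd ℂ) (a z) * b z) =
        ∑ z : X × d × d, (starRingEnd ℂ) (A z.1 z.2.1 z.2.2) * B z.1 z.2.1 z.2.2 from rfl,
        hsum A B (fun x => (hApsd x).1)]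
      exact Finset.sum_congr rfl fun x _ => h1 x
    have haa : ∑ z : X × d × d, (starRingEnd ℂ) (a z) * a z =
        ∑ x, Matrix.trace (A x * A x) := hsum A A (fun x => (hApsd x).1)
    have hbb : ∑ z : X × d × d, (starRingEnd ℂ) (b z) * b z =
        ∑ x, Matrix.trace ((T * ρ x * T) * ρ x) := by
      rw [hsum B B (fun x => (hBpsd x).1)]
      exact Finset.sum_congr rfl fun x _ => h3 x
    rw [ha, haa, hbb] at hcs
    -- (2): ∑ trace (A x * A x) ≤ card X
    have h2 : (∑ x, Matrix.trace (A x * A x)).re ≤ (Fintype.card X : ℝ) := by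
      have h2a : ∀ x, (Matrix.trace (A x * A x)).re ≤ (Matrix.trace ((Q * Q) * A x)).re := by
        intro x
        have h1N : (1 - N x).PosSemidef := by
          have e : (1 : Matrix d d ℂ) - N x =
              (1 - ∑ y, N y) + (Finset.univ.erase x).sum N := by
            rw [Finset.sum_erase_eq_sub (Finset.mem_univ x)]; abel
          rw [e]
          exact hNsum.add (Finset.sum_induction _ _ (fun a b ha hb => ha.add hb)
            Matrix.PosSemidef.zero (fun y _ => hN y))
        have hDpsd : ((Q * Q) - A x).PosSemidef := by
          have e : (Q * Q) - A x = Q * (1 - N x) * Q := by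
            simp only [hAdef, Matrix.mul_sub, Matrix.sub_mul, Matrix.mul_one]
          rw [e]
          have := h1N.mul_mul_conjTranspose_same Q; rwa [hQH] at this
        have := trace_mul_nonneg hDpsd (hApsd x)
        rw [Matrix.sub_mul, Matrix.trace_sub] at this
        have := re_nonneg_of_nonneg this
        rw [Complex.sub_re] at this
        linarith
      have h2b : ∑ x, Matrix.trace ((Q * Q) * A x) =
          Matrix.trace ((∑ x, ρ x) * (∑ x, N x)) := by
        have e : ∑ x, (Q * Q) * A x = (Q * Q) * (Q * (∑ x, N x) * Q) := by
          rw [← Finset.mul_sum]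
          congr 1
          simp only [hAdef]
          rw [← Finset.sum_mul, ← Finset.mul_sum]
        rw [← Matrix.trace_sum, e, show (Q * Q) * (Q * (∑ x, N x) * Q) = ((Q * Q) * Q * (∑ x, N x)) * Q by
          simp only [Matrix.mul_assoc], Matrix.trace_mul_comm,
          show Q * ((Q * Q) * Q * (∑ x, N x)) = (Q * (Q * Q) * Q) * (∑ x, N x) by
          simp only [Matrix.mul_assoc], hQ4]
      have h2c : (Matrix.trace ((∑ x, ρ x) * (∑ x, N x))).re ≤ (Fintype.card X : ℝ) := by
        have h0 := trace_mul_nonneg hσpsd hNsum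
        rw [Matrix.mul_sub, Matrix.mul_one, Matrix.trace_sub] at h0
        have h0' := re_nonneg_of_nonneg h0
        rw [Complex.sub_re] at h0'
        have htr : (Matrix.trace (∑ x, ρ x)).re = (Fintype.card X : ℝ) := by
          rw [Matrix.trace_sum]
          simp only [(fun x => (hρ x).2)]
          simp
        linarith
      calc (∑ x, Matrix.trace (A x * A x)).re
          = ∑ x, (Matrix.trace (A x * A x)).re := Complex.re_sum _ _
        _ ≤ ∑ x, (Matrix.trace ((Q * Q) * A x)).re := Finset.sum_le_sum fun x _ => h2a x
        _ = (∑ x, Matrix.trace ((Q * Q) * A x)).re := (Complex.re_sum _ _).symm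
        _ = (Matrix.trace ((∑ x, ρ x) * (∑ x, N x))).re := by rw [h2b]
        _ ≤ (Fintype.card X : ℝ) := h2c
    have hbb0 : 0 ≤ (∑ x, Matrix.trace ((T * ρ x * T) * ρ x)).re := by
      rw [Complex.re_sum]
      refine Finset.sum_nonneg fun x _ => ?_
      rw [← h3 x]
      exact re_nonneg_of_nonneg (trace_mul_nonneg (hBpsd x) (hBpsd x))
    calc (∑ x, (Matrix.trace (N x * ρ x)).re) ^ 2
        = (∑ x, Matrix.trace (N x * ρ x)).re ^ 2 := by rw [Complex.re_sum]
      _ ≤ (∑ x, Matrix.trace (A x * A x)).re *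
            (∑ x, Matrix.trace ((T * ρ x * T) * ρ x)).re := hcs
      _ ≤ (Fintype.card X : ℝ) * ∑ x, (Matrix.trace ((T * ρ x * T) * ρ x)).re := by
          rw [← Complex.re_sum _ (fun x => Matrix.trace ((T * ρ x * T) * ρ x))]
          exact mul_le_mul_of_nonneg_right h2 hbb0
  -- nonnegativity of the PGM success probability
  have hTρT : ∀ x, (T * ρ x * T).PosSemidef := fun x => by
    have := ((hρ x).1).mul_mul_conjTranspose_same T; rwa [hTH] at this
  have hW0 : 0 ≤ succProb ρ (fun x => T * ρ x * T) := by
    unfold succProb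
    refine mul_nonneg (by positivity) (Finset.sum_nonneg fun x _ => ?_)
    exact re_nonneg_of_nonneg (trace_mul_nonneg (hTρT x) (hρ x).1)
  -- the upper bound
  have hub : ∀ q ∈ {q : ℝ | ∃ N : X → Matrix d d ℂ, IsPOVM N ∧ q = succProb ρ N},
      q ≤ Real.sqrt (succProb ρ (fun x => T * ρ x * T)) := by
    rintro q ⟨N, hPOVM, rfl⟩
    rcases isEmpty_or_nonempty X with hX | hX
    · have : succProb ρ N = 0 := by simp [succProb]
      rw [this]
      exact Real.sqrt_nonneg _
    · have hcard : (0 : ℝ) < (Fintype.card X : ℝ) := by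
        exact_mod_cast Fintype.card_pos
      have hq0 : 0 ≤ succProb ρ N := by
        unfold succProb
        refine mul_nonneg (by positivity) (Finset.sum_nonneg fun x _ => ?_)
        exact re_nonneg_of_nonneg (trace_mul_nonneg (hPOVM.1 x) (hρ x).1)
      rw [Real.le_sqrt hq0 hW0]
      have hk := key N hPOVM
      unfold succProb
      rw [mul_pow]
      calc ((Fintype.card X : ℝ))⁻¹ ^ 2 * (∑ x, (Matrix.trace (N x * ρ x)).re) ^ 2
          ≤ ((Fintype.card X : ℝ))⁻¹ ^ 2 *
            ((Fintype.card X : ℝ) * ∑ x, (Matrix.trace ((T * ρ x * T) * ρ x)).re) :=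
            mul_le_mul_of_nonneg_left hk (by positivity)
        _ = ((Fintype.card X : ℝ))⁻¹ *
            ∑ x, (Matrix.trace ((T * ρ x * T) * ρ x)).re := by
            field_simp
  have h0mem : (0 : ℝ) ∈ {q : ℝ | ∃ N : X → Matrix d d ℂ, IsPOVM N ∧ q = succProb ρ N} := by
    refine ⟨fun _ => 0, ⟨fun _ => Matrix.PosSemidef.zero, by
      simpa using (Matrix.PosSemidef.one : (1 : Matrix d d ℂ).PosSemidef)⟩, by simp [succProb]⟩
  have hp0 : 0 ≤ p := hp.1 h0mem
  have hple : p ≤ Real.sqrt (succProb ρ (fun x => T * ρ x * T)) := hp.2 hub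
  calc p ^ 2 ≤ (Real.sqrt (succProb ρ (fun x => T * ρ x * T))) ^ 2 :=
      pow_le_pow_left₀ hp0 hple 2
    _ = succProb ρ (fun x => T * ρ x * T) := Real.sq_sqrt hW0
end

section
/- Let σ̃ := Σ_{j∈[d]} (|j⟩⟨j| ⊗ I) Π_sym^{d,m+1} (|j⟩⟨j| ⊗ I). Then σ̃ = Σ_{j∈[d]} |j⟩⟨j| ⊗ Σ_{r=0}^m ((r+1)/(m+1)) Σ_{t⃗ ∈ T^m_{j,r}} |s(t⃗)⟩⟨s(t⃗)|, where T^m_{j,r} = {t⃗ ∈ I_{d,m} : t_j = r}. In particular, the vectors |j⟩ ⊗ |s(t⃗)⟩ with t⃗ ∈ I_{d,m} are exactly the eigenvectors of σ̃ with nonzero eigenvalue, the eigenvalue being (t_j+1)/(m+1). -/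
open scoped BigOperators Matrix

noncomputable def tensPow (α : Type*) (m : ℕ) (φ : α → ℂ) :
    EuclideanSpace ℂ (Fin m → α) := WithLp.toLp 2 (fun j => ∏ k, φ (j k))

noncomputable def symSubspace (α : Type*) (m : ℕ) :
    Submodule ℂ (EuclideanSpace ℂ (Fin m → α)) :=
  Submodule.span ℂ (Set.range (tensPow α m))

/-- Matrix of the orthogonal projector onto the symmetric subspace of `(ℂ^α)^{⊗m}`. -/
noncomputable def symProj (α : Type*) [Fintype α] [DecidableEq α] (m : ℕ) :
    Matrix (Fin m → α) (Fin m → α) ℂ :=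
  fun a b => (inner ℂ (EuclideanSpace.single a (1:ℂ))
    ((Submodule.orthogonalProjectionOnto (symSubspace α m) (EuclideanSpace.single b (1:ℂ)) :
      symSubspace α m) : EuclideanSpace ℂ (Fin m → α)) : ℂ)

def typeOf {α : Type*} [Fintype α] [DecidableEq α] {m : ℕ} (j : Fin m → α) : α → ℕ :=
  fun i => (Finset.univ.filter (fun k => j k = i)).card

def Idm (α : Type*) [Fintype α] [DecidableEq α] (m : ℕ) : Finset (α → ℕ) :=
  ((Finset.univ : Finset (α → Fin (m+1))).image (fun f i => (f i : ℕ))).filter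
    (fun t => ∑ i, t i = m)

noncomputable def typeVec (α : Type*) [Fintype α] [DecidableEq α] (m : ℕ) (t : α → ℕ) :
    EuclideanSpace ℂ (Fin m → α) :=
  WithLp.toLp 2 (fun j => if typeOf j = t then ((((Real.sqrt (Nat.multinomial Finset.univ t))⁻¹ : ℝ)) : ℂ)
    else 0)

/-- `|j⟩⟨j| ⊗ I`: projector onto basis state `j` of the first tensor factor. -/
def projFirst (α : Type*) [DecidableEq α] (m : ℕ) (j : α) :
    Matrix (Fin (m+1) → α) (Fin (m+1) → α) ℂ :=
  Matrix.diagonal (fun a => if a 0 = j then 1 else 0)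

/-- The vector `|j⟩ ⊗ |s(t⃗)⟩` in `(ℂ^α)^{⊗(m+1)}`. -/
noncomputable def basisTensTypeVec (α : Type*) [Fintype α] [DecidableEq α] (m : ℕ)
    (j : α) (t : α → ℕ) : (Fin (m+1) → α) → ℂ :=
  fun a => (if a 0 = j then (1 : ℂ) else 0) * typeVec α m t (fun i => a i.succ)

section Aux
variable {α : Type*} [Fintype α] [DecidableEq α]

lemma typeVec_apply {m : ℕ} (t : α → ℕ) (j : Fin m → α) :
    typeVec α m t j = if typeOf j = t then ((((Real.sqrt (Nat.multinomial Finset.univ t))⁻¹ : ℝ)) : ℂ)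
      else 0 := rfl

lemma tensPow_apply {m : ℕ} (φ : α → ℂ) (j : Fin m → α) :
    tensPow α m φ j = ∏ k, φ (j k) := rfl

lemma sum_typeOf {m : ℕ} (j : Fin m → α) : ∑ i, typeOf j i = m := by
  have := Finset.card_eq_sum_card_fiberwise (f := j) (s := Finset.univ) (t := Finset.univ)
    (fun x _ => Finset.mem_univ _)
  simpa [typeOf] using this.symm

lemma mem_Idm_iff {m : ℕ} {t : α → ℕ} : t ∈ Idm α m ↔ ∑ i, t i = m := by
  constructor
  · exact fun h => (Finset.mem_filter.mp h).2
  · intro h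
    refine Finset.mem_filter.mpr ⟨Finset.mem_image.mpr ⟨fun i => ⟨t i, ?_⟩, Finset.mem_univ _, rfl⟩, h⟩
    exact Nat.lt_succ_of_le (h ▸ Finset.single_le_sum (f := t) (fun i _ => Nat.zero_le _)
      (Finset.mem_univ i))

lemma typeOf_mem_Idm {m : ℕ} (j : Fin m → α) : typeOf j ∈ Idm α m :=
  mem_Idm_iff.mpr (sum_typeOf j)

lemma typeOf_apply_eq_sum {m : ℕ} (j : Fin m → α) (i : α) :
    typeOf j i = ∑ k, if j k = i then 1 else 0 := by
  unfold typeOf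
  rw [Finset.card_filter]

lemma typeOf_cons {m : ℕ} (x : α) (f : Fin m → α) (i : α) :
    typeOf (Fin.cons x f) i = (if x = i then 1 else 0) + typeOf f i := by
  rw [typeOf_apply_eq_sum, Fin.sum_univ_succ, typeOf_apply_eq_sum (m := m)]
  simp only [Fin.cons_zero, Fin.cons_succ]

lemma typeOf_cons_eq_iff {m : ℕ} (x : α) (f : Fin m → α) (t : α → ℕ) :
    typeOf (Fin.cons x f) = t ↔ 1 ≤ t x ∧ typeOf f = Function.update t x (t x - 1) := by
  constructor
  · intro h
    have hx : (1 : ℕ) + typeOf f x = t x := by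
      have := congrFun h x; rwa [typeOf_cons, if_pos rfl] at this
    refine ⟨by omega, funext fun i => ?_⟩
    rcases eq_or_ne i x with rfl | hne
    · rw [Function.update_self]; omega
    · have hi := congrFun h i
      rw [typeOf_cons, if_neg (Ne.symm hne), zero_add] at hi
      rw [Function.update_of_ne hne, hi]
  · rintro ⟨h1, h2⟩
    funext i
    rw [typeOf_cons, h2]
    rcases eq_or_ne i x with rfl | hne
    · rw [Function.update_self, if_pos rfl]; omega
    · rw [Function.update_of_ne hne, if_neg (Ne.symm hne), zero_add]

lemma card_typeOf_mul_factorial :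
    ∀ (m : ℕ) (t : α → ℕ), (∑ i, t i = m) →
    (Finset.univ.filter (fun j : Fin m → α => typeOf j = t)).card * ∏ i, (t i).factorial
      = m.factorial := by
  intro m
  induction m with
  | zero =>
    intro t ht
    have ht0 : ∀ i, t i = 0 := fun i => Finset.sum_eq_zero_iff.mp ht i (Finset.mem_univ i)
    have h1 : ∀ j : Fin 0 → α, typeOf j = t := by
      intro j; funext i; rw [ht0 i, typeOf_apply_eq_sum]; simp
    simp [Finset.filter_true_of_mem fun j _ => h1 j, ht0]
  | succ m ih =>
    intro t ht
    have hcard : (Finset.univ.filter (fun j : Fin (m+1) → α => typeOf j = t)).card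
        = ∑ x : α, if 1 ≤ t x then
            (Finset.univ.filter (fun f : Fin m → α =>
              typeOf f = Function.update t x (t x - 1))).card
          else 0 := by
      rw [Finset.card_filter]
      rw [← Equiv.sum_comp (Fin.consEquiv (fun _ : Fin (m+1) => α))
        (fun j : Fin (m+1) → α => if typeOf j = t then (1:ℕ) else 0)]
      rw [Fintype.sum_prod_type]
      refine Finset.sum_congr rfl fun x _ => ?_
      have hcons : ∀ f : Fin m → α,
          (Fin.consEquiv (fun _ : Fin (m+1) => α)) (x, f) = Fin.cons x f := fun f => rfl
      simp only [hcons, typeOf_cons_eq_iff]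
      by_cases h1 : 1 ≤ t x
      · rw [if_pos h1, Finset.card_filter]
        exact Finset.sum_congr rfl fun f _ => by simp [h1]
      · rw [if_neg h1]
        exact Finset.sum_eq_zero fun f _ => by simp [h1]
    rw [hcard, Finset.sum_mul]
    have hterm : ∀ x : α,
        (if 1 ≤ t x then
            (Finset.univ.filter (fun f : Fin m → α =>
              typeOf f = Function.update t x (t x - 1))).card
          else 0) * ∏ i, (t i).factorial = t x * m.factorial := by
      intro x
      by_cases h1 : 1 ≤ t x
      · rw [if_pos h1]
        have hS := Finset.sum_eq_add_sum_sdiff_singleton_of_mem (Finset.mem_univ x) t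
        have hS' := Finset.sum_update_of_mem (Finset.mem_univ x) t (t x - 1)
        have ht' : ∑ i, Function.update t x (t x - 1) i = m := by rw [hS']; omega
        have hC := ih _ ht'
        have hprod : ∏ i, (t i).factorial
            = t x * ∏ i, (Function.update t x (t x - 1) i).factorial := by
          rw [Finset.prod_eq_mul_prod_sdiff_singleton_of_mem (Finset.mem_univ x)
              fun i => (t i).factorial,
            Finset.prod_eq_mul_prod_sdiff_singleton_of_mem (Finset.mem_univ x)
              fun i => (Function.update t x (t x - 1) i).factorial]
          have h2 : ∀ i ∈ Finset.univ \ {x},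
              (Function.update t x (t x - 1) i).factorial = (t i).factorial := by
            intro i hi
            have : i ≠ x := by simpa using (Finset.mem_sdiff.mp hi).2
            rw [Function.update_of_ne this]
          rw [Finset.prod_congr rfl h2, Function.update_self, ← mul_assoc]
          congr 1
          obtain ⟨k, hk⟩ : ∃ k, t x = k + 1 := ⟨t x - 1, by omega⟩
          rw [hk]
          simp [Nat.factorial_succ, mul_comm]
        rw [hprod, ← mul_assoc, mul_comm _ (t x), mul_assoc, hC]
      · rw [if_neg h1]
        have h0 : t x = 0 := by omega
        simp [h0]
    rw [Finset.sum_congr rfl fun x _ => hterm x, ← Finset.sum_mul, ht, Nat.factorial_succ]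

lemma card_typeOf {m : ℕ} (t : α → ℕ) (ht : ∑ i, t i = m) :
    (Finset.univ.filter (fun j : Fin m → α => typeOf j = t)).card
      = Nat.multinomial Finset.univ t := by
  have h1 := card_typeOf_mul_factorial m t ht
  have h2 := Nat.multinomial_spec Finset.univ t
  rw [ht] at h2
  have hpos : 0 < ∏ i, (t i).factorial := Finset.prod_pos fun i _ => Nat.factorial_pos _
  refine Nat.eq_of_mul_eq_mul_right hpos ?_
  rw [h1, mul_comm]
  exact h2.symm

end Aux

section Aux2
variable {α : Type*} [Fintype α] [DecidableEq α]

lemma sqrtN_pos (t : α → ℕ) : (0:ℝ) < Real.sqrt (Nat.multinomial Finset.univ t) :=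
  Real.sqrt_pos.mpr (by exact_mod_cast Nat.multinomial_pos _ _)

lemma conj_typeVec {m : ℕ} (t : α → ℕ) (j : Fin m → α) :
    (starRingEnd ℂ) (typeVec α m t j) = typeVec α m t j := by
  simp only [typeVec_apply]; split <;> simp

lemma mul_self_typeVec {m : ℕ} {t : α → ℕ} (ht : ∑ i, t i = m) :
    ∑ j : Fin m → α, typeVec α m t j * typeVec α m t j = 1 := by
  simp only [typeVec_apply]
  have : ∀ j : Fin m → α,
      (if typeOf j = t then ((((Real.sqrt (Nat.multinomial Finset.univ t))⁻¹ : ℝ)) : ℂ) else 0)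
        * (if typeOf j = t then ((((Real.sqrt (Nat.multinomial Finset.univ t))⁻¹ : ℝ)) : ℂ) else 0)
      = if typeOf j = t then ((((Nat.multinomial Finset.univ t : ℝ))⁻¹ : ℝ) : ℂ) else 0 := by
    intro j; split
    · rw [← Complex.ofReal_mul, ← mul_inv, Real.mul_self_sqrt (by positivity)]
    · rw [mul_zero]
  rw [Finset.sum_congr rfl fun j _ => this j, ← Finset.sum_filter, Finset.sum_const,
    card_typeOf t ht, nsmul_eq_mul]
  rw [← Complex.ofReal_natCast, ← Complex.ofReal_mul, mul_inv_cancel₀]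
  · exact Complex.ofReal_one
  · exact_mod_cast (Nat.multinomial_pos _ _).ne'

lemma inner_typeVec {m : ℕ} {t t' : α → ℕ} (ht : ∑ i, t i = m) :
    (inner ℂ (typeVec α m t) (typeVec α m t') : ℂ) = if t = t' then 1 else 0 := by
  rw [PiLp.inner_apply]
  simp only [RCLike.inner_apply', conj_typeVec]
  rcases eq_or_ne t t' with rfl | hne
  · rw [if_pos rfl]; exact mul_self_typeVec ht
  · rw [if_neg hne]
    refine Finset.sum_eq_zero fun j _ => ?_
    simp only [typeVec_apply]
    split_ifs with h1 h2
    · exact absurd (h1 ▸ h2) hne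
    · rw [mul_zero]
    · rw [zero_mul]
    · rw [zero_mul]

lemma dot_typeVec {m : ℕ} {t t' : α → ℕ} (ht : ∑ i, t i = m) :
    ∑ j : Fin m → α, typeVec α m t j * typeVec α m t' j = if t = t' then 1 else 0 := by
  have := inner_typeVec (α := α) (t := t) (t' := t') ht
  rw [PiLp.inner_apply] at this
  simpa only [RCLike.inner_apply', conj_typeVec] using this

lemma tensPow_eq_sum {m : ℕ} (φ : α → ℂ) :
    tensPow α m φ = ∑ t ∈ Idm α m,
      ((∏ i, φ i ^ t i) * ((Real.sqrt (Nat.multinomial Finset.univ t) : ℝ) : ℂ)) •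
        typeVec α m t := by
  ext j
  have hRHS : (∑ t ∈ Idm α m,
      ((∏ i, φ i ^ t i) * ((Real.sqrt (Nat.multinomial Finset.univ t) : ℝ) : ℂ)) •
        typeVec α m t) j
      = ∑ t ∈ Idm α m,
        ((∏ i, φ i ^ t i) * ((Real.sqrt (Nat.multinomial Finset.univ t) : ℝ) : ℂ)) *
          typeVec α m t j := by
    rw [WithLp.ofLp_sum, Finset.sum_apply]
    exact Finset.sum_congr rfl fun t _ => rfl
  rw [hRHS, Finset.sum_eq_single (typeOf j)]
  · rw [typeVec_apply]
    rw [if_pos rfl, mul_assoc, ← Complex.ofReal_mul,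
      mul_inv_cancel₀ (sqrtN_pos (typeOf j)).ne', Complex.ofReal_one, mul_one]
    simp only [tensPow_apply]
    rw [← Finset.prod_fiberwise_of_maps_to (fun k _ => Finset.mem_univ (j k))
      (fun k => φ (j k))]
    refine Finset.prod_congr rfl fun i _ => ?_
    calc ∏ k ∈ Finset.filter (fun k => j k = i) Finset.univ, φ (j k)
        = ∏ _k ∈ Finset.filter (fun k => j k = i) Finset.univ, φ i :=
          Finset.prod_congr rfl fun k hk => by rw [(Finset.mem_filter.mp hk).2]
      _ = φ i ^ typeOf j i := by rw [Finset.prod_const]; rfl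
  · intro t _ hne
    simp only [typeVec_apply]
    rw [if_neg fun h => hne h.symm, mul_zero]
  · exact fun h => absurd (typeOf_mem_Idm j) h

lemma typeVec_mem {m : ℕ} {t0 : α → ℕ} (ht0 : t0 ∈ Idm α m) :
    typeVec α m t0 ∈ symSubspace α m := by
  rw [← Submodule.orthogonal_orthogonal (symSubspace α m)]
  rw [Submodule.mem_orthogonal]
  intro y hy
  have hz : ∀ φ : α → ℂ, (inner ℂ (tensPow α m φ) y : ℂ) = 0 := fun φ =>
    (Submodule.mem_orthogonal _ y).mp hy _ (Submodule.subset_span ⟨φ, rfl⟩)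
  set g : (α → ℕ) → ℂ := fun t => (inner ℂ (typeVec α m t) y : ℂ) with hg
  have H : ∀ z : α → ℂ, ∑ t ∈ Idm α m,
      (∏ i, z i ^ t i) *
        (((Real.sqrt (Nat.multinomial Finset.univ t) : ℝ) : ℂ) * g t) = 0 := by
    intro z
    have h0 := hz (fun i => (starRingEnd ℂ) (z i))
    rw [tensPow_eq_sum, sum_inner] at h0
    rw [← h0]
    refine Finset.sum_congr rfl fun t _ => ?_
    rw [inner_smul_left]
    rw [map_mul, map_prod]
    have hc : ((starRingEnd ℂ) ((Real.sqrt (Nat.multinomial Finset.univ t) : ℝ) : ℂ))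
        = ((Real.sqrt (Nat.multinomial Finset.univ t) : ℝ) : ℂ) := Complex.conj_ofReal _
    rw [hc]
    have hp : ∀ i : α, (starRingEnd ℂ) ((starRingEnd ℂ) (z i) ^ t i) = z i ^ t i := by
      intro i; rw [map_pow, Complex.conj_conj]
    rw [Finset.prod_congr rfl fun i _ => hp i]
    ring
  set p : MvPolynomial α ℂ := ∑ t ∈ Idm α m,
    MvPolynomial.monomial (Finsupp.equivFunOnFinite.symm t)
      (((Real.sqrt (Nat.multinomial Finset.univ t) : ℝ) : ℂ) * g t) with hpdef
  have hpz : p = 0 := by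
    apply MvPolynomial.funext
    intro z
    rw [hpdef, map_sum, map_zero]
    rw [← H z]
    refine Finset.sum_congr rfl fun t _ => ?_
    rw [MvPolynomial.eval_monomial]
    rw [Finsupp.prod_pow]
    have : ∀ i : α, (Finsupp.equivFunOnFinite.symm t) i = t i := fun i => rfl
    rw [Finset.prod_congr rfl fun i _ => by rw [this i]]
    ring
  have hcoeff := congrArg (MvPolynomial.coeff (Finsupp.equivFunOnFinite.symm t0)) hpz
  rw [hpdef, MvPolynomial.coeff_zero] at hcoeff
  rw [MvPolynomial.coeff_sum] at hcoeff
  rw [Finset.sum_eq_single t0] at hcoeff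
  · rw [MvPolynomial.coeff_monomial, if_pos rfl] at hcoeff
    have hgz : g t0 = 0 := by
      rcases mul_eq_zero.mp hcoeff with h | h
      · exact absurd h (by exact_mod_cast (sqrtN_pos t0).ne')
      · exact h
    rw [hg] at hgz
    exact inner_eq_zero_symm.mp hgz
  · intro t _ hne
    rw [MvPolynomial.coeff_monomial, if_neg]
    exact fun h => hne (Finsupp.equivFunOnFinite.symm.injective h)
  · exact fun h => absurd ht0 h

lemma orthogonalProjection_single {m : ℕ} (b : Fin m → α) :
    ((Submodule.orthogonalProjectionOnto (symSubspace α m) (EuclideanSpace.single b (1:ℂ)) :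
        symSubspace α m) : EuclideanSpace ℂ (Fin m → α))
      = ∑ t ∈ Idm α m, typeVec α m t b • typeVec α m t := by
  refine Submodule.eq_starProjection_of_mem_of_inner_eq_zero ?_ ?_
  · exact Submodule.sum_mem _ fun t ht => Submodule.smul_mem _ _ (typeVec_mem ht)
  · intro w hw
    set u := EuclideanSpace.single b (1:ℂ) - ∑ t ∈ Idm α m, typeVec α m t b • typeVec α m t
      with hu
    change (inner ℂ u w : ℂ) = 0
    have hgen : ∀ φ : α → ℂ, (inner ℂ u (tensPow α m φ) : ℂ) = 0 := by
      intro φ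
      rw [tensPow_eq_sum, inner_sum]
      refine Finset.sum_eq_zero fun t htm => ?_
      rw [inner_smul_right]
      have hinner : (inner ℂ u (typeVec α m t) : ℂ) = 0 := by
        rw [hu, inner_sub_left, EuclideanSpace.inner_single_left, sum_inner]
        have hsum : ∑ t' ∈ Idm α m,
            (inner ℂ (typeVec α m t' b • typeVec α m t') (typeVec α m t) : ℂ)
            = typeVec α m t b := by
          rw [Finset.sum_eq_single t]
          · rw [inner_smul_left, inner_typeVec (mem_Idm_iff.mp htm), if_pos rfl, mul_one,
              conj_typeVec]
          · intro t' ht' hne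
            rw [inner_smul_left, inner_typeVec (mem_Idm_iff.mp ht'), if_neg hne, mul_zero]
          · exact fun h => absurd htm h
        rw [hsum, map_one, one_mul, sub_self]
      rw [hinner, mul_zero]
    have hker : symSubspace α m ≤ LinearMap.ker ((innerSL ℂ u).toLinearMap) := by
      rw [symSubspace, Submodule.span_le]
      rintro _ ⟨φ, rfl⟩
      simpa using hgen φ
    simpa using hker hw

lemma symProj_apply {m : ℕ} (a b : Fin m → α) :
    symProj α m a b = if typeOf a = typeOf b
      then ((((Nat.multinomial Finset.univ (typeOf a) : ℝ))⁻¹ : ℝ) : ℂ) else 0 := by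
  unfold symProj
  rw [orthogonalProjection_single, EuclideanSpace.inner_single_left, map_one, one_mul]
  have happ : (∑ t ∈ Idm α m, typeVec α m t b • typeVec α m t) a
      = ∑ t ∈ Idm α m, typeVec α m t b * typeVec α m t a := by
    rw [WithLp.ofLp_sum, Finset.sum_apply]
    exact Finset.sum_congr rfl fun t _ => rfl
  rw [happ, Finset.sum_eq_single (typeOf a)]
  · rw [typeVec_apply, typeVec_apply]
    rcases eq_or_ne (typeOf a) (typeOf b) with h | h
    · rw [if_pos h, if_pos h.symm, if_pos rfl, ← Complex.ofReal_mul, ← mul_inv,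
        Real.mul_self_sqrt (by positivity)]
    · rw [if_neg h, if_neg (fun hh => h hh.symm), zero_mul]
  · intro t _ hne
    have hz : typeVec α m t a = 0 := by
      simp only [typeVec_apply]; rw [if_neg fun h => hne h.symm]
    rw [hz, mul_zero]
  · exact fun h => absurd (typeOf_mem_Idm a) h
end Aux2

section Aux3
variable {α : Type*} [Fintype α] [DecidableEq α]

lemma multinomial_succ {m : ℕ} (t : α → ℕ) (ht : ∑ i, t i = m) (j : α) :
    (t j + 1) * Nat.multinomial Finset.univ (fun i => (if j = i then 1 else 0) + t i)
      = (m + 1) * Nat.multinomial Finset.univ t := by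
  set t' : α → ℕ := fun i => (if j = i then 1 else 0) + t i with ht'def
  have hsum' : ∑ i, t' i = m + 1 := by
    rw [ht'def, Finset.sum_add_distrib, ht, Finset.sum_ite_eq, if_pos (Finset.mem_univ j)]
    omega
  have hspec := Nat.multinomial_spec Finset.univ t
  have hspec' := Nat.multinomial_spec Finset.univ t'
  rw [ht] at hspec; rw [hsum'] at hspec'
  have hprod : ∏ i, (t' i).factorial = (t j + 1) * ∏ i, (t i).factorial := by
    rw [Finset.prod_eq_mul_prod_sdiff_singleton_of_mem (Finset.mem_univ j) fun i => (t' i).factorial,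
      Finset.prod_eq_mul_prod_sdiff_singleton_of_mem (Finset.mem_univ j) fun i => (t i).factorial]
    have h2 : ∀ i ∈ Finset.univ \ {j}, (t' i).factorial = (t i).factorial := by
      intro i hi
      have hne : j ≠ i := fun h => by simp [h] at hi
      rw [ht'def]; simp [hne]
    rw [Finset.prod_congr rfl h2, ← mul_assoc]
    congr 1
    have htj : t' j = t j + 1 := by rw [ht'def]; simp [Nat.add_comm]
    rw [htj, Nat.factorial_succ]
  have hpos : 0 < ∏ i, (t i).factorial := Finset.prod_pos fun i _ => Nat.factorial_pos _
  refine Nat.eq_of_mul_eq_mul_left hpos ?_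
  calc (∏ i, (t i).factorial) * ((t j + 1) * Nat.multinomial Finset.univ t')
      = ((t j + 1) * ∏ i, (t i).factorial) * Nat.multinomial Finset.univ t' := by ring
    _ = (∏ i, (t' i).factorial) * Nat.multinomial Finset.univ t' := by rw [hprod]
    _ = (m+1).factorial := hspec'
    _ = (m+1) * m.factorial := Nat.factorial_succ m
    _ = (m+1) * ((∏ i, (t i).factorial) * Nat.multinomial Finset.univ t) := by rw [hspec]
    _ = (∏ i, (t i).factorial) * ((m + 1) * Nat.multinomial Finset.univ t) := by ring

lemma multinomial_succ_real {m : ℕ} (t : α → ℕ) (ht : ∑ i, t i = m) (j : α) :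
    ((Nat.multinomial Finset.univ (fun i => (if j = i then 1 else 0) + t i) : ℝ))⁻¹
      = ((t j : ℝ) + 1) / ((m : ℝ) + 1) * ((Nat.multinomial Finset.univ t : ℝ))⁻¹ := by
  have h := multinomial_succ t ht j
  have hN : (0:ℝ) < (Nat.multinomial Finset.univ t : ℝ) := by
    exact_mod_cast Nat.multinomial_pos _ _
  have hN' : (0:ℝ) < ((Nat.multinomial Finset.univ
      (fun i => (if j = i then 1 else 0) + t i) : ℕ) : ℝ) := by
    exact_mod_cast Nat.multinomial_pos _ _
  have hcast : ((t j : ℝ) + 1) * ((Nat.multinomial Finset.univ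
        (fun i => (if j = i then 1 else 0) + t i) : ℕ) : ℝ)
      = ((m:ℝ) + 1) * (Nat.multinomial Finset.univ t : ℝ) := by
    exact_mod_cast h
  have hm : (0:ℝ) < (m:ℝ) + 1 := by positivity
  field_simp
  nlinarith [hcast]

lemma typeOf_tail {m : ℕ} (a : Fin (m+1) → α) (i : α) :
    typeOf a i = (if a 0 = i then 1 else 0) + typeOf (fun k : Fin m => a k.succ) i := by
  have h : Fin.cons (a 0) (fun k : Fin m => a k.succ) = a := Fin.cons_self_tail a
  conv_lhs => rw [← h]
  rw [typeOf_cons]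

lemma conj_basis {m : ℕ} (j : α) (t : α → ℕ) (a : Fin (m+1) → α) :
    (starRingEnd ℂ) (basisTensTypeVec α m j t a) = basisTensTypeVec α m j t a := by
  unfold basisTensTypeVec
  rw [map_mul, conj_typeVec]
  congr 1
  split <;> simp

lemma basis_dot {m : ℕ} {t t' : α → ℕ} (ht : ∑ i, t i = m) (j j' : α) :
    star (basisTensTypeVec α m j t) ⬝ᵥ basisTensTypeVec α m j' t'
      = if j = j' ∧ t = t' then 1 else 0 := by
  unfold dotProduct
  have h1 : ∀ a, (star (basisTensTypeVec α m j t)) a = basisTensTypeVec α m j t a :=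
    fun a => conj_basis j t a
  rw [Finset.sum_congr rfl fun a _ => by rw [h1 a]]
  rw [← Equiv.sum_comp (Fin.consEquiv (fun _ : Fin (m+1) => α))
    (fun a => basisTensTypeVec α m j t a * basisTensTypeVec α m j' t' a)]
  rw [Fintype.sum_prod_type]
  have hterm : ∀ (x : α) (f : Fin m → α),
      basisTensTypeVec α m j t (Fin.cons x f) * basisTensTypeVec α m j' t' (Fin.cons x f)
      = ((if x = j then 1 else 0) * (if x = j' then (1:ℂ) else 0)) *
        (typeVec α m t f * typeVec α m t' f) := by
    intro x f
    unfold basisTensTypeVec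
    have harg : (fun i : Fin m => (Fin.cons x f : Fin (m+1) → α) i.succ) = f :=
      funext fun i => by simp
    rw [harg]
    simp only [Fin.cons_zero]
    ring
  have hcons : ∀ (x : α) (f : Fin m → α),
      (Fin.consEquiv (fun _ : Fin (m+1) => α)) (x, f) = Fin.cons x f := fun _ _ => rfl
  simp only [hcons]
  rw [Finset.sum_congr rfl fun x _ => Finset.sum_congr rfl fun f _ => hterm x f]
  rw [Finset.sum_congr rfl fun x _ => (Finset.mul_sum _ _ _).symm]
  rw [Finset.sum_congr rfl fun x _ => by rw [dot_typeVec (t := t) (t' := t') ht]]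
  rw [← Finset.sum_mul]
  have hx : ∑ x : α, (if x = j then (1:ℂ) else 0) * (if x = j' then 1 else 0)
      = if j = j' then 1 else 0 := by
    rcases eq_or_ne j j' with rfl | hne
    · rw [if_pos rfl]
      rw [Finset.sum_eq_single j]
      · simp
      · intro x _ hx; rw [if_neg hx, zero_mul]
      · exact fun h => absurd (Finset.mem_univ j) h
    · rw [if_neg hne]
      refine Finset.sum_eq_zero fun x _ => ?_
      rcases eq_or_ne x j with rfl | hxj
      · rw [if_neg hne, mul_zero]
      · rw [if_neg hxj, zero_mul]
  rw [hx]
  split_ifs with h1 h2 h3 <;> simp_all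

lemma vecMulVec_mulVec {n : Type*} [Fintype n] (u v w : n → ℂ) :
    Matrix.vecMulVec u v *ᵥ w = (v ⬝ᵥ w) • u := by
  funext a
  change ∑ b, (u a * v b) * w b = (∑ b, v b * w b) * u a
  rw [Finset.sum_mul]
  exact Finset.sum_congr rfl fun b _ => by ring

lemma sum_mulVec {n ι : Type*} [Fintype n] (s : Finset ι) (A : ι → Matrix n n ℂ) (v : n → ℂ) :
    (∑ i ∈ s, A i) *ᵥ v = ∑ i ∈ s, A i *ᵥ v := by
  funext a
  have hL : ∀ b, (∑ i ∈ s, A i) a b * v b = ∑ i ∈ s, A i a b * v b := fun b => by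
    rw [Matrix.sum_apply, Finset.sum_mul]
  change ∑ b, (∑ i ∈ s, A i) a b * v b = (∑ i ∈ s, A i *ᵥ v) a
  rw [Finset.sum_congr rfl fun b _ => hL b, Finset.sum_comm, Finset.sum_apply a s _]
  rfl

end Aux3

/-- **Diagonal-block form of `σ̃ = Σ_j (|j⟩⟨j|⊗I) Π_sym^{d,m+1} (|j⟩⟨j|⊗I)`**:
`σ̃ = Σ_j |j⟩⟨j| ⊗ Σ_{r=0}^m ((r+1)/(m+1)) Σ_{t⃗ : t_j = r} |s(t⃗)⟩⟨s(t⃗)|`; in particular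
the vectors `|j⟩ ⊗ |s(t⃗)⟩`, `t⃗ ∈ I_{d,m}`, are exactly the eigenvectors of `σ̃` with
nonzero eigenvalue, the eigenvalue being `(t_j+1)/(m+1)`. -/
theorem sigmaTilde_eigen_decomposition (d m : ℕ) :
    (∑ j : Fin d, projFirst (Fin d) m j * symProj (Fin d) (m+1) * projFirst (Fin d) m j)
      = (∑ j : Fin d, ∑ r ∈ Finset.range (m+1),
          ((((r : ℝ) + 1) / ((m : ℝ) + 1) : ℝ) : ℂ) •
            ∑ t ∈ (Idm (Fin d) m).filter (fun t => t j = r),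
              Matrix.vecMulVec (basisTensTypeVec (Fin d) m j t)
                (star (basisTensTypeVec (Fin d) m j t)))
    ∧ (∀ j : Fin d, ∀ t ∈ Idm (Fin d) m,
        (∑ j' : Fin d, projFirst (Fin d) m j' * symProj (Fin d) (m+1) * projFirst (Fin d) m j')
            *ᵥ basisTensTypeVec (Fin d) m j t
          = ((((t j : ℝ) + 1) / ((m : ℝ) + 1) : ℝ) : ℂ) • basisTensTypeVec (Fin d) m j t)
    ∧ (∀ w : (Fin (m+1) → Fin d) → ℂ,
        (∀ j : Fin d, ∀ t ∈ Idm (Fin d) m,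
          star (basisTensTypeVec (Fin d) m j t) ⬝ᵥ w = 0) →
        (∑ j' : Fin d, projFirst (Fin d) m j' * symProj (Fin d) (m+1) * projFirst (Fin d) m j')
            *ᵥ w = 0) := by
  classical
  have key : (∑ j : Fin d, projFirst (Fin d) m j * symProj (Fin d) (m+1) * projFirst (Fin d) m j)
      = (∑ j : Fin d, ∑ r ∈ Finset.range (m+1),
          ((((r : ℝ) + 1) / ((m : ℝ) + 1) : ℝ) : ℂ) •
            ∑ t ∈ (Idm (Fin d) m).filter (fun t => t j = r),
              Matrix.vecMulVec (basisTensTypeVec (Fin d) m j t)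
                (star (basisTensTypeVec (Fin d) m j t))) := by
    ext a b
    rw [Matrix.sum_apply, Matrix.sum_apply]
    have hL : ∀ j : Fin d,
        (projFirst (Fin d) m j * symProj (Fin d) (m+1) * projFirst (Fin d) m j) a b
        = (if a 0 = j then 1 else 0) *
            ((if b 0 = j then 1 else 0) * symProj (Fin d) (m+1) a b) := by
      intro j
      unfold projFirst
      rw [Matrix.mul_diagonal, Matrix.diagonal_mul]
      ring
    have hR : ∀ j : Fin d,
        (∑ r ∈ Finset.range (m+1),
          ((((r : ℝ) + 1) / ((m : ℝ) + 1) : ℝ) : ℂ) •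
            ∑ t ∈ (Idm (Fin d) m).filter (fun t => t j = r),
              Matrix.vecMulVec (basisTensTypeVec (Fin d) m j t)
                (star (basisTensTypeVec (Fin d) m j t))) a b
        = (if a 0 = j then 1 else 0) * ((if b 0 = j then 1 else 0) *
            ∑ r ∈ Finset.range (m+1),
              ((((r : ℝ) + 1) / ((m : ℝ) + 1) : ℝ) : ℂ) *
                ∑ t ∈ (Idm (Fin d) m).filter (fun t => t j = r),
                  typeVec (Fin d) m t (fun i => a i.succ)
                    * typeVec (Fin d) m t (fun i => b i.succ)) := by
      intro j
      rw [Matrix.sum_apply]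
      calc ∑ r ∈ Finset.range (m+1),
            (((((r : ℝ) + 1) / ((m : ℝ) + 1) : ℝ) : ℂ) •
              ∑ t ∈ (Idm (Fin d) m).filter (fun t => t j = r),
                Matrix.vecMulVec (basisTensTypeVec (Fin d) m j t)
                  (star (basisTensTypeVec (Fin d) m j t))) a b
          = ∑ r ∈ Finset.range (m+1),
              (if a 0 = j then 1 else 0) * ((if b 0 = j then 1 else 0) *
                (((((r : ℝ) + 1) / ((m : ℝ) + 1) : ℝ) : ℂ) *
                  ∑ t ∈ (Idm (Fin d) m).filter (fun t => t j = r),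
                    typeVec (Fin d) m t (fun i => a i.succ)
                      * typeVec (Fin d) m t (fun i => b i.succ))) := by
            refine Finset.sum_congr rfl fun r _ => ?_
            rw [Matrix.smul_apply, Matrix.sum_apply, smul_eq_mul]
            have hterm : ∀ t ∈ (Idm (Fin d) m).filter (fun t => t j = r),
                Matrix.vecMulVec (basisTensTypeVec (Fin d) m j t)
                  (star (basisTensTypeVec (Fin d) m j t)) a b
                = (if a 0 = j then 1 else 0) * ((if b 0 = j then 1 else 0) *
                    (typeVec (Fin d) m t (fun i => a i.succ)
                      * typeVec (Fin d) m t (fun i => b i.succ))) := by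
              intro t _
              rw [Matrix.vecMulVec_apply]
              have hstar : (star (basisTensTypeVec (Fin d) m j t)) b
                  = basisTensTypeVec (Fin d) m j t b := conj_basis j t b
              rw [hstar]
              unfold basisTensTypeVec
              ring
            rw [Finset.sum_congr rfl hterm]
            rw [← Finset.mul_sum, ← Finset.mul_sum]
            ring
        _ = _ := by rw [← Finset.mul_sum, ← Finset.mul_sum]
    rw [Finset.sum_congr rfl fun j _ => hL j, Finset.sum_congr rfl fun j _ => hR j]
    have collapse : ∀ X : Fin d → ℂ,
        ∑ j : Fin d, (if a 0 = j then 1 else 0) * ((if b 0 = j then 1 else 0) * X j)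
        = if b 0 = a 0 then X (a 0) else 0 := by
      intro X
      rw [Finset.sum_eq_single (a 0)]
      · rw [if_pos rfl, one_mul, ite_mul, one_mul, zero_mul]
      · intro j _ hne
        rw [if_neg (fun h => hne h.symm), zero_mul]
      · exact fun h => absurd (Finset.mem_univ _) h
    rw [collapse, collapse]
    by_cases h : b 0 = a 0
    · rw [if_pos h, if_pos h]
      -- main computation
      have hstep1 : ∑ r ∈ Finset.range (m+1),
            ((((r : ℝ) + 1) / ((m : ℝ) + 1) : ℝ) : ℂ) *
              ∑ t ∈ (Idm (Fin d) m).filter (fun t => t (a 0) = r),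
                typeVec (Fin d) m t (fun i => a i.succ) * typeVec (Fin d) m t (fun i => b i.succ)
          = ∑ t ∈ Idm (Fin d) m,
              (((((t (a 0) : ℝ)) + 1) / ((m : ℝ) + 1) : ℝ) : ℂ) *
                (typeVec (Fin d) m t (fun i => a i.succ) * typeVec (Fin d) m t (fun i => b i.succ)) := by
        rw [← Finset.sum_fiberwise_of_maps_to (g := fun t => t (a 0))
          (fun t htI => Finset.mem_range.mpr (Nat.lt_succ_of_le
            ((mem_Idm_iff.mp htI) ▸ Finset.single_le_sum (f := t)
              (fun i _ => Nat.zero_le _) (Finset.mem_univ (a 0)))))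
          (fun t => (((((t (a 0) : ℝ)) + 1) / ((m : ℝ) + 1) : ℝ) : ℂ) *
            (typeVec (Fin d) m t (fun i => a i.succ) * typeVec (Fin d) m t (fun i => b i.succ)))]
        refine Finset.sum_congr rfl fun r _ => ?_
        rw [Finset.mul_sum]
        refine Finset.sum_congr rfl fun t htf => ?_
        rw [(Finset.mem_filter.mp htf).2]
      rw [hstep1, Finset.sum_eq_single (typeOf (fun i => a i.succ))]
      · have htAsum : ∑ i, typeOf (fun i : Fin m => a i.succ) i = m := sum_typeOf _
        by_cases h2 : typeOf (fun i => b i.succ) = typeOf (fun i => a i.succ)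
        · have hab : typeOf a = typeOf b := by
            funext i
            rw [typeOf_tail a i, typeOf_tail b i, h, h2]
          rw [symProj_apply, if_pos hab]
          have htva : typeVec (Fin d) m (typeOf (fun i => a i.succ)) (fun i => a i.succ)
              = ((((Real.sqrt (Nat.multinomial Finset.univ (typeOf (fun i => a i.succ))))⁻¹ : ℝ)) : ℂ) := by
            rw [typeVec_apply]; rw [if_pos rfl]
          have htvb : typeVec (Fin d) m (typeOf (fun i => a i.succ)) (fun i => b i.succ)
              = ((((Real.sqrt (Nat.multinomial Finset.univ (typeOf (fun i => a i.succ))))⁻¹ : ℝ)) : ℂ) := by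
            simp only [typeVec_apply]; rw [if_pos h2]
          rw [htva, htvb, ← Complex.ofReal_mul, ← mul_inv,
            Real.mul_self_sqrt (by positivity), ← Complex.ofReal_mul]
          have hta : typeOf a = fun i => (if (a 0) = i then 1 else 0) + typeOf (fun i => a i.succ) i :=
            funext fun i => typeOf_tail a i
          rw [hta, multinomial_succ_real (typeOf (fun i => a i.succ)) htAsum (a 0)]
        · rw [symProj_apply, if_neg]
          · have htvb : typeVec (Fin d) m (typeOf (fun i => a i.succ)) (fun i => b i.succ) = 0 := by
              simp only [typeVec_apply]; rw [if_neg h2]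
            rw [htvb, mul_zero, mul_zero]
          · intro hab
            refine h2 (funext fun i => ?_)
            have h3 := congrFun hab i
            rw [typeOf_tail a i, typeOf_tail b i, h] at h3
            show typeOf (fun k : Fin m => b k.succ) i = typeOf (fun k : Fin m => a k.succ) i
            omega
      · intro t _ hne
        have htva : typeVec (Fin d) m t (fun i => a i.succ) = 0 := by
          simp only [typeVec_apply]; rw [if_neg fun hh => hne hh.symm]
        rw [htva, zero_mul, mul_zero]
      · exact fun hh => absurd (typeOf_mem_Idm (fun i => a i.succ)) hh
    · rw [if_neg h, if_neg h]
  refine ⟨key, ?_, ?_⟩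
  · intro j t htI
    have htsum : ∑ i, t i = m := mem_Idm_iff.mp htI
    rw [key, sum_mulVec]
    have hinner : ∀ (j' : Fin d) (r : ℕ),
        (∑ t' ∈ (Idm (Fin d) m).filter (fun t' => t' j' = r),
          Matrix.vecMulVec (basisTensTypeVec (Fin d) m j' t')
            (star (basisTensTypeVec (Fin d) m j' t'))) *ᵥ basisTensTypeVec (Fin d) m j t
        = if j' = j ∧ t j' = r then basisTensTypeVec (Fin d) m j t else 0 := by
      intro j' r
      rw [sum_mulVec]
      have hterm : ∀ t' ∈ (Idm (Fin d) m).filter (fun t' => t' j' = r),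
          Matrix.vecMulVec (basisTensTypeVec (Fin d) m j' t')
              (star (basisTensTypeVec (Fin d) m j' t')) *ᵥ basisTensTypeVec (Fin d) m j t
          = if j' = j ∧ t' = t then basisTensTypeVec (Fin d) m j t else 0 := by
        intro t' ht'
        rw [vecMulVec_mulVec,
          basis_dot (mem_Idm_iff.mp (Finset.mem_filter.mp ht').1) j' j]
        split_ifs with hh
        · rw [hh.1, hh.2, one_smul]
        · rw [zero_smul]
      rw [Finset.sum_congr rfl hterm]
      by_cases hj : j' = j
      · subst hj
        by_cases hr : t j' = r
        · rw [if_pos ⟨rfl, hr⟩]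
          rw [Finset.sum_eq_single_of_mem t (Finset.mem_filter.mpr ⟨htI, hr⟩)]
          · rw [if_pos ⟨rfl, rfl⟩]
          · intro t' _ hne
            rw [if_neg (fun hh => hne hh.2)]
        · rw [if_neg (fun hh => hr hh.2)]
          refine Finset.sum_eq_zero fun t' ht' => ?_
          have h2 := (Finset.mem_filter.mp ht').2
          exact if_neg (fun hh => hr (by rw [← hh.2]; exact h2))
      · rw [if_neg (fun hh => hj hh.1)]
        exact Finset.sum_eq_zero fun t' _ => if_neg (fun hh => hj hh.1)
    have houter : ∀ j' : Fin d,
        (∑ r ∈ Finset.range (m+1),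
          ((((r : ℝ) + 1) / ((m : ℝ) + 1) : ℝ) : ℂ) •
            ∑ t' ∈ (Idm (Fin d) m).filter (fun t' => t' j' = r),
              Matrix.vecMulVec (basisTensTypeVec (Fin d) m j' t')
                (star (basisTensTypeVec (Fin d) m j' t'))) *ᵥ basisTensTypeVec (Fin d) m j t
        = ∑ r ∈ Finset.range (m+1),
            ((((r : ℝ) + 1) / ((m : ℝ) + 1) : ℝ) : ℂ) •
              (if j' = j ∧ t j' = r then basisTensTypeVec (Fin d) m j t else 0) := by
      intro j'
      rw [sum_mulVec]
      exact Finset.sum_congr rfl fun r _ => by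
        rw [Matrix.smul_mulVec, hinner j' r]
    rw [Finset.sum_congr rfl fun j' _ => houter j']
    rw [Finset.sum_eq_single j]
    · have hsimp : ∀ r ∈ Finset.range (m+1),
          ((((r : ℝ) + 1) / ((m : ℝ) + 1) : ℝ) : ℂ) •
            (if j = j ∧ t j = r then basisTensTypeVec (Fin d) m j t else 0)
          = if t j = r then ((((r : ℝ) + 1) / ((m : ℝ) + 1) : ℝ) : ℂ) •
              basisTensTypeVec (Fin d) m j t else 0 := by
        intro r _
        by_cases h2 : t j = r
        · rw [if_pos ⟨rfl, h2⟩, if_pos h2]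
        · rw [if_neg (fun hh => h2 hh.2), if_neg h2, smul_zero]
      rw [Finset.sum_congr rfl hsimp, Finset.sum_ite_eq]
      rw [if_pos (Finset.mem_range.mpr (Nat.lt_succ_of_le
        (htsum ▸ Finset.single_le_sum (f := t) (fun i _ => Nat.zero_le _)
          (Finset.mem_univ j))))]
    · intro j' _ hne
      refine Finset.sum_eq_zero fun r _ => ?_
      rw [if_neg (fun hh => hne hh.1), smul_zero]
    · exact fun h => absurd (Finset.mem_univ _) h
  · intro w hw
    rw [key, sum_mulVec]
    refine Finset.sum_eq_zero fun j' _ => ?_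
    rw [sum_mulVec]
    refine Finset.sum_eq_zero fun r _ => ?_
    rw [Matrix.smul_mulVec, sum_mulVec]
    have hz : ∑ t' ∈ (Idm (Fin d) m).filter (fun t' => t' j' = r),
        Matrix.vecMulVec (basisTensTypeVec (Fin d) m j' t')
          (star (basisTensTypeVec (Fin d) m j' t')) *ᵥ w = 0 := by
      refine Finset.sum_eq_zero fun t' ht' => ?_
      rw [vecMulVec_mulVec, hw j' t' (Finset.mem_filter.mp ht').1, zero_smul]
    rw [hz, smul_zero]
end

section
/- Let d > 2(m+1). Then Σ_{r'=2}^m C(d+m, m+1)^{-1} · (m+1) · C(d+m-r'-2, m-r') ≤ 2(m+1)^4 / d^3. -/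
open scoped BigOperators

/-- Key natural-number estimate: `C(d+m-r-2, m-r) * d^(r+1) ≤ C(d+m, m+1) * (m+1)^(r+1)`. -/
lemma key_choose_bound (d m : ℕ) (hm : 1 ≤ m) (hd : 2 * (m + 1) < d) :
    ∀ r, r ≤ m → Nat.choose (d + m - r - 2) (m - r) * d ^ (r + 1)
      ≤ Nat.choose (d + m) (m + 1) * (m + 1) ^ (r + 1) := by
  have hd2 : 2 ≤ d := by omega
  intro r
  induction r with
  | zero =>
    intro _
    -- base: C(d+m-2, m) * d ≤ C(d+m, m+1) * (m+1)
    have hid := Nat.add_one_mul_choose_eq (d + m - 1) m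
    have h1 : d + m - 1 + 1 = d + m := by omega
    rw [h1] at hid
    -- hid : (d+m) * C(d+m-1, m) = C(d+m, m+1) * (m+1)
    have h2 : Nat.choose (d + m - 0 - 2) (m - 0) ≤ Nat.choose (d + m - 1) m := by
      simpa using Nat.choose_le_choose m (show d + m - 0 - 2 ≤ d + m - 1 by omega)
    calc Nat.choose (d + m - 0 - 2) (m - 0) * d ^ (0 + 1)
        ≤ Nat.choose (d + m - 1) m * (d + m) := by
          simpa [pow_succ] using Nat.mul_le_mul h2 (show d ^ (0+1) ≤ d + m by simpa using Nat.le_add_right d m)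
      _ = Nat.choose (d + m) (m + 1) * (m + 1) := by rw [← hid]; ring
      _ = Nat.choose (d + m) (m + 1) * (m + 1) ^ (0 + 1) := by ring
  | succ n ih =>
    intro hn1
    have hn : n ≤ m := by omega
    have hnm : n < m := by omega
    have ihn := ih hn
    -- identity: C(d+m-n-3, m-n-1) * (d+m-n-2) = C(d+m-n-2, m-n) * (m-n)
    have hid := Nat.add_one_mul_choose_eq (d + m - n - 3) (m - n - 1)
    have e1 : d + m - n - 3 + 1 = d + m - n - 2 := by omega
    have e2 : m - n - 1 + 1 = m - n := by omega
    rw [e1, e2] at hid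
    -- hid : (d+m-n-2) * C(d+m-n-3, m-n-1) = C(d+m-n-2, m-n) * (m-n)
    have hpos : 0 < d + m - n - 2 := by omega
    -- side inequality : (m-n) * d ≤ (m+1) * (d+m-n-2)
    have hside : (m - n) * d ≤ (m + 1) * (d + m - n - 2) := by
      obtain ⟨s, hs⟩ : ∃ s, m = n + s := ⟨m - n, by omega⟩
      obtain ⟨D, hDd⟩ : ∃ D, d = D + 2 := ⟨d - 2, by omega⟩
      subst hs hDd
      have h1 : n + s - n = s := by omega
      have h2 : D + 2 + (n + s) - n - 2 = D + s := by omega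
      rw [h1, h2]
      nlinarith [show 1 ≤ s by omega]
    -- main step, after multiplying by (d+m-n-2)
    have hmain : Nat.choose (d + m - (n+1) - 2) (m - (n+1)) * d ^ (n + 1 + 1) * (d + m - n - 2)
        ≤ Nat.choose (d + m) (m + 1) * (m + 1) ^ (n + 1 + 1) * (d + m - n - 2) := by
      have e4 : d + m - (n + 1) - 2 = d + m - n - 3 := by omega
      have e5 : m - (n + 1) = m - n - 1 := by omega
      rw [e4, e5]
      calc Nat.choose (d + m - n - 3) (m - n - 1) * d ^ (n + 1 + 1) * (d + m - n - 2)
          = ((d + m - n - 2) * Nat.choose (d + m - n - 3) (m - n - 1)) * d ^ (n + 1 + 1) := by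
            ring
        _ = (Nat.choose (d + m - n - 2) (m - n) * (m - n)) * d ^ (n + 1 + 1) := by rw [hid]
        _ = (Nat.choose (d + m - n - 2) (m - n) * d ^ (n + 1)) * ((m - n) * d) := by
            ring
        _ ≤ (Nat.choose (d + m) (m + 1) * (m + 1) ^ (n + 1)) * ((m + 1) * (d + m - n - 2)) := by
            exact Nat.mul_le_mul ihn hside
        _ = Nat.choose (d + m) (m + 1) * (m + 1) ^ (n + 1 + 1) * (d + m - n - 2) := by
            ring
    exact Nat.le_of_mul_le_mul_right hmain hpos

/-- Geometric-sum bound: for `0 ≤ q` with `2q ≤ 1`, `Σ_{r=2}^m q^(r+1) ≤ 2 q^3`. -/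
lemma geom_tail_bound (q : ℝ) (hq0 : 0 ≤ q) (hq : 2 * q ≤ 1) (m : ℕ) (hm : 1 ≤ m) :
    ∑ r ∈ Finset.Icc 2 m, q ^ (r + 1) ≤ 2 * q ^ 3 := by
  have main : ∀ k, 1 ≤ k → ∑ r ∈ Finset.Icc 2 k, q ^ (r + 1) ≤ 2 * q ^ 3 - 2 * q ^ (k + 2) := by
    intro k hk
    induction k with
    | zero => omega
    | succ n ih =>
      rcases Nat.lt_or_ge n 1 with h1 | h1
      · -- n = 0, so k = 1 : Icc 2 1 is empty
        have hn0 : n = 0 := by omega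
        subst hn0
        simp [Finset.Icc_eq_empty_of_lt]
      · have ihn := ih h1
        rw [Finset.sum_Icc_succ_top (by omega : 2 ≤ n + 1)]
        have hstep : q ^ (n + 1 + 1) ≤ 2 * q ^ (n + 2) - 2 * q ^ (n + 1 + 2) := by
          have h2 : 2 * q ^ (n + 1 + 2) ≤ q ^ (n + 2) := by
            have : 2 * q ^ (n + 1 + 2) = (2 * q) * q ^ (n + 2) := by ring
            rw [this]
            calc (2 * q) * q ^ (n + 2) ≤ 1 * q ^ (n + 2) :=
                  mul_le_mul_of_nonneg_right hq (by positivity)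
              _ = q ^ (n + 2) := by ring
          have h3 : q ^ (n + 1 + 1) = q ^ (n + 2) := by ring
          linarith
        linarith
  calc ∑ r ∈ Finset.Icc 2 m, q ^ (r + 1) ≤ 2 * q ^ 3 - 2 * q ^ (m + 2) := main m hm
    _ ≤ 2 * q ^ 3 := by
        have : 0 ≤ 2 * q ^ (m + 2) := by positivity
        linarith

/-- **Diagonal contribution bound in the PGM analysis**: for `d > 2(m+1)`,
`Σ_{r'=2}^m C(d+m, m+1)⁻¹ (m+1) C(d+m-r'-2, m-r') ≤ 2(m+1)^4 / d³`. -/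
theorem diagonal_contribution_bound (d m : ℕ) (hm : 1 ≤ m) (hd : 2 * (m + 1) < d) :
    ∑ r' ∈ Finset.Icc 2 m,
        ((Nat.choose (d + m) (m + 1) : ℝ))⁻¹ * ((m : ℝ) + 1) *
          (Nat.choose (d + m - r' - 2) (m - r') : ℝ)
      ≤ 2 * ((m : ℝ) + 1) ^ 4 / (d : ℝ) ^ 3 := by
  have hd0 : (0:ℝ) < (d:ℝ) := by
    have : 0 < d := by omega
    exact_mod_cast this
  have hCpos : (0:ℝ) < ((Nat.choose (d + m) (m + 1) : ℕ) : ℝ) := by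
    have : 0 < Nat.choose (d + m) (m + 1) := Nat.choose_pos (by omega)
    exact_mod_cast this
  set q : ℝ := ((m : ℝ) + 1) / (d : ℝ) with hq_def
  have hq0 : 0 ≤ q := by positivity
  have hq2 : 2 * q ≤ 1 := by
    have h1 : 2 * q = (2 * ((m:ℝ) + 1)) / (d:ℝ) := by rw [hq_def]; ring
    rw [h1, div_le_one hd0]
    have h2 : ((2 * (m+1) : ℕ) : ℝ) ≤ ((d:ℕ):ℝ) := by exact_mod_cast Nat.le_of_lt hd
    push_cast at h2
    linarith
  -- termwise bound
  have hterm : ∀ r ∈ Finset.Icc 2 m,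
      ((Nat.choose (d + m) (m + 1) : ℝ))⁻¹ * ((m : ℝ) + 1) *
        (Nat.choose (d + m - r - 2) (m - r) : ℝ)
      ≤ ((m : ℝ) + 1) * q ^ (r + 1) := by
    intro r hr
    rw [Finset.mem_Icc] at hr
    have hkey := key_choose_bound d m hm hd r hr.2
    have hkeyR : (Nat.choose (d + m - r - 2) (m - r) : ℝ) * (d:ℝ) ^ (r + 1)
        ≤ (Nat.choose (d + m) (m + 1) : ℝ) * ((m:ℝ) + 1) ^ (r + 1) := by
      exact_mod_cast hkey
    have hdr : (0:ℝ) < (d:ℝ) ^ (r + 1) := by positivity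
    have hCr : (Nat.choose (d + m - r - 2) (m - r) : ℝ)
        ≤ (Nat.choose (d + m) (m + 1) : ℝ) * q ^ (r + 1) := by
      rw [hq_def, div_pow, ← mul_div_assoc, le_div_iff₀ hdr]
      linarith
    calc ((Nat.choose (d + m) (m + 1) : ℝ))⁻¹ * ((m : ℝ) + 1) *
          (Nat.choose (d + m - r - 2) (m - r) : ℝ)
        ≤ ((Nat.choose (d + m) (m + 1) : ℝ))⁻¹ * ((m : ℝ) + 1) *
          ((Nat.choose (d + m) (m + 1) : ℝ) * q ^ (r + 1)) := by
          apply mul_le_mul_of_nonneg_left hCr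
          positivity
      _ = ((m : ℝ) + 1) * q ^ (r + 1) := by
          field_simp
  calc ∑ r' ∈ Finset.Icc 2 m,
        ((Nat.choose (d + m) (m + 1) : ℝ))⁻¹ * ((m : ℝ) + 1) *
          (Nat.choose (d + m - r' - 2) (m - r') : ℝ)
      ≤ ∑ r' ∈ Finset.Icc 2 m, ((m : ℝ) + 1) * q ^ (r' + 1) := Finset.sum_le_sum hterm
    _ = ((m : ℝ) + 1) * ∑ r' ∈ Finset.Icc 2 m, q ^ (r' + 1) := by
        rw [Finset.mul_sum]
    _ ≤ ((m : ℝ) + 1) * (2 * q ^ 3) := by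
        apply mul_le_mul_of_nonneg_left (geom_tail_bound q hq0 hq2 m hm)
        positivity
    _ = 2 * ((m : ℝ) + 1) ^ 4 / (d : ℝ) ^ 3 := by
        rw [hq_def]
        field_simp
end

section
/- There exists a constant C'' > 0 (independent of d and m) such that for all integers d > 2(m+1) and m ≥ 1: Σ_{r,r'=1}^m C(d+m, m+1)^{-1} · d · (m+1) · C(d+m-r-r'-4, m-r-r'-1) ≤ C'' · m^7 / d^3, where terms with m-r-r'-1 < 0 are taken to be zero. -/
open scoped BigOperators

private lemma pgm_step (n j c : ℕ) (h : c ≤ n + 1) :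
    c * Nat.choose n j ≤ (j + 1) * Nat.choose (n + 1) (j + 1) := by
  have hs := Nat.add_one_mul_choose_eq n j
  calc c * Nat.choose n j ≤ (n + 1) * Nat.choose n j := Nat.mul_le_mul_right _ h
    _ = Nat.choose (n + 1) (j + 1) * (j + 1) := hs
    _ = (j + 1) * Nat.choose (n + 1) (j + 1) := Nat.mul_comm _ _

private lemma pgm_mono (t a b : ℕ) : Nat.choose a b ≤ Nat.choose (a + t) (b + t) := by
  induction t with
  | zero => simp
  | succ t ih =>
      have h : Nat.choose (a + t + 1) (b + t + 1)
          = Nat.choose (a + t) (b + t) + Nat.choose (a + t) (b + t + 1) :=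
        Nat.choose_succ_succ _ _
      calc Nat.choose a b ≤ Nat.choose (a + t) (b + t) := ih
        _ ≤ Nat.choose (a + t + 1) (b + t + 1) := by omega
        _ = Nat.choose (a + (t + 1)) (b + (t + 1)) := by ring_nf

private lemma pgm_key (e k t : ℕ) :
    (e + 1) ^ 4 * Nat.choose (e + k) k
      ≤ (k + t + 4) ^ 4 * Nat.choose (e + k + t + 6) (k + t + 4) := by
  have h1 : (e + 1) * Nat.choose (e + k) k ≤ (k + 1) * Nat.choose (e + k + 1) (k + 1) :=
    pgm_step _ _ _ (by omega)
  have h2 : (e + 1) * Nat.choose (e + k + 1) (k + 1) ≤ (k + 2) * Nat.choose (e + k + 2) (k + 2) :=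
    pgm_step _ _ _ (by omega)
  have h3 : (e + 1) * Nat.choose (e + k + 2) (k + 2) ≤ (k + 3) * Nat.choose (e + k + 3) (k + 3) :=
    pgm_step _ _ _ (by omega)
  have h4 : (e + 1) * Nat.choose (e + k + 3) (k + 3) ≤ (k + 4) * Nat.choose (e + k + 4) (k + 4) :=
    pgm_step _ _ _ (by omega)
  have h5 : Nat.choose (e + k + 4) (k + 4) ≤ Nat.choose (e + k + t + 4) (k + t + 4) := by
    have h := pgm_mono t (e + k + 4) (k + 4)
    have e1 : e + k + 4 + t = e + k + t + 4 := by ring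
    have e2 : k + 4 + t = k + t + 4 := by ring
    rwa [e1, e2] at h
  have h6 : Nat.choose (e + k + t + 4) (k + t + 4) ≤ Nat.choose (e + k + t + 6) (k + t + 4) :=
    Nat.choose_le_choose _ (by omega)
  calc (e + 1) ^ 4 * Nat.choose (e + k) k
      = (e + 1) ^ 3 * ((e + 1) * Nat.choose (e + k) k) := by ring
    _ ≤ (e + 1) ^ 3 * ((k + 1) * Nat.choose (e + k + 1) (k + 1)) := Nat.mul_le_mul_left _ h1
    _ = (k + 1) * ((e + 1) ^ 2 * ((e + 1) * Nat.choose (e + k + 1) (k + 1))) := by ring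
    _ ≤ (k + 1) * ((e + 1) ^ 2 * ((k + 2) * Nat.choose (e + k + 2) (k + 2))) :=
        Nat.mul_le_mul_left _ (Nat.mul_le_mul_left _ h2)
    _ = (k + 1) * (k + 2) * ((e + 1) * ((e + 1) * Nat.choose (e + k + 2) (k + 2))) := by ring
    _ ≤ (k + 1) * (k + 2) * ((e + 1) * ((k + 3) * Nat.choose (e + k + 3) (k + 3))) :=
        Nat.mul_le_mul_left _ (Nat.mul_le_mul_left _ h3)
    _ = (k + 1) * (k + 2) * (k + 3) * ((e + 1) * Nat.choose (e + k + 3) (k + 3)) := by ring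
    _ ≤ (k + 1) * (k + 2) * (k + 3) * ((k + 4) * Nat.choose (e + k + 4) (k + 4)) :=
        Nat.mul_le_mul_left _ h4
    _ = (k + 1) * (k + 2) * (k + 3) * (k + 4) * Nat.choose (e + k + 4) (k + 4) := by ring
    _ ≤ (k + t + 4) ^ 4 * Nat.choose (e + k + 4) (k + 4) := by
        have h : (k + 1) * (k + 2) * (k + 3) * (k + 4) ≤ (k + t + 4) ^ 4 := by
          calc (k + 1) * (k + 2) * (k + 3) * (k + 4)
              ≤ (k + t + 4) * (k + t + 4) * (k + t + 4) * (k + t + 4) :=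
                Nat.mul_le_mul (Nat.mul_le_mul (Nat.mul_le_mul (by omega) (by omega))
                  (by omega)) (by omega)
            _ = (k + t + 4) ^ 4 := by ring
        exact Nat.mul_le_mul_right _ h
    _ ≤ (k + t + 4) ^ 4 * Nat.choose (e + k + t + 4) (k + t + 4) := Nat.mul_le_mul_left _ h5
    _ ≤ (k + t + 4) ^ 4 * Nat.choose (e + k + t + 6) (k + t + 4) := Nat.mul_le_mul_left _ h6

private lemma pgm_nat (d m r r' : ℕ) (hm : 1 ≤ m) (hd : 2 * (m + 1) < d)
    (hr : 1 ≤ r) (hr' : 1 ≤ r') (hrr : r + r' + 1 ≤ m) :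
    d ^ 4 * (m + 1) * Nat.choose (d + m - r - r' - 4) (m - r - r' - 1)
      ≤ 512 * m ^ 5 * Nat.choose (d + m) (m + 1) := by
  have hd5 : 5 ≤ d := by omega
  have key := pgm_key (d - 3) (m - r - r' - 1) (r + r' - 2)
  rw [show d - 3 + (m - r - r' - 1) = d + m - r - r' - 4 from by omega,
      show m - r - r' - 1 + (r + r' - 2) + 4 = m + 1 from by omega,
      show d + m - r - r' - 4 + (r + r' - 2) + 6 = d + m from by omega,
      show d - 3 + 1 = d - 2 from by omega] at key
  set N := Nat.choose (d + m - r - r' - 4) (m - r - r' - 1) with hN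
  set M := Nat.choose (d + m) (m + 1) with hM
  have hpow : d ^ 4 ≤ 16 * (d - 2) ^ 4 := by
    calc d ^ 4 ≤ (2 * (d - 2)) ^ 4 := Nat.pow_le_pow_left (by omega) 4
      _ = 16 * (d - 2) ^ 4 := by ring
  have hpow2 : (m + 1) ^ 5 ≤ 32 * m ^ 5 := by
    calc (m + 1) ^ 5 ≤ (2 * m) ^ 5 := Nat.pow_le_pow_left (by omega) 5
      _ = 32 * m ^ 5 := by ring
  calc d ^ 4 * (m + 1) * N = (m + 1) * (d ^ 4 * N) := by ring
    _ ≤ (m + 1) * (16 * (d - 2) ^ 4 * N) :=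
        Nat.mul_le_mul_left _ (Nat.mul_le_mul_right _ hpow)
    _ = 16 * (m + 1) * ((d - 2) ^ 4 * N) := by ring
    _ ≤ 16 * (m + 1) * ((m + 1) ^ 4 * M) := Nat.mul_le_mul_left _ key
    _ = 16 * ((m + 1) ^ 5 * M) := by ring
    _ ≤ 16 * (32 * m ^ 5 * M) := Nat.mul_le_mul_left _ (Nat.mul_le_mul_right _ hpow2)
    _ = 512 * m ^ 5 * M := by ring

/-- **Off-diagonal contribution bound in the PGM analysis**: there is a constant `C'' > 0`,
independent of `d` and `m`, such that for all `m ≥ 1` and `d > 2(m+1)`,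
`Σ_{r,r'=1}^m C(d+m, m+1)⁻¹ · d · (m+1) · C(d+m-r-r'-4, m-r-r'-1) ≤ C'' m⁷ / d³`,
where terms with `m - r - r' - 1 < 0` are taken to be zero. -/
theorem offdiagonal_contribution_bound :
    ∃ C'' : ℝ, 0 < C'' ∧ ∀ d m : ℕ, 1 ≤ m → 2 * (m + 1) < d →
      ∑ r ∈ Finset.Icc 1 m, ∑ r' ∈ Finset.Icc 1 m,
          ((Nat.choose (d + m) (m + 1) : ℝ))⁻¹ * (d : ℝ) * ((m : ℝ) + 1) *
            (if r + r' + 1 ≤ m then (Nat.choose (d + m - r - r' - 4) (m - r - r' - 1) : ℝ)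
              else 0)
        ≤ C'' * (m : ℝ) ^ 7 / (d : ℝ) ^ 3 := by
  refine ⟨512, by norm_num, fun d m hm hd => ?_⟩
  have hdpos : (0 : ℝ) < (d : ℝ) := by
    have : 0 < d := by omega
    exact_mod_cast this
  have hmpos : (0 : ℝ) < (m : ℝ) := by exact_mod_cast hm
  have hMpos : (0 : ℝ) < (Nat.choose (d + m) (m + 1) : ℝ) := by
    exact_mod_cast Nat.choose_pos (by omega)
  have hterm : ∀ r ∈ Finset.Icc 1 m, ∀ r' ∈ Finset.Icc 1 m,
      ((Nat.choose (d + m) (m + 1) : ℝ))⁻¹ * (d : ℝ) * ((m : ℝ) + 1) *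
          (if r + r' + 1 ≤ m then (Nat.choose (d + m - r - r' - 4) (m - r - r' - 1) : ℝ)
            else 0)
        ≤ 512 * (m : ℝ) ^ 5 / (d : ℝ) ^ 3 := by
    intro r hr r' hr'
    rw [Finset.mem_Icc] at hr hr'
    by_cases h : r + r' + 1 ≤ m
    · rw [if_pos h]
      have hnat := pgm_nat d m r r' hm hd hr.1 hr'.1 h
      have hcast : (d : ℝ) ^ 4 * ((m : ℝ) + 1) *
          (Nat.choose (d + m - r - r' - 4) (m - r - r' - 1) : ℝ)
          ≤ 512 * (m : ℝ) ^ 5 * (Nat.choose (d + m) (m + 1) : ℝ) := by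
        exact_mod_cast hnat
      rw [show ((Nat.choose (d + m) (m + 1) : ℝ))⁻¹ * (d : ℝ) * ((m : ℝ) + 1) *
          (Nat.choose (d + m - r - r' - 4) (m - r - r' - 1) : ℝ)
          = ((d : ℝ) * ((m : ℝ) + 1) *
            (Nat.choose (d + m - r - r' - 4) (m - r - r' - 1) : ℝ)) /
            (Nat.choose (d + m) (m + 1) : ℝ) from by ring,
        div_le_div_iff₀ hMpos (by positivity)]
      calc (d : ℝ) * ((m : ℝ) + 1) *
            (Nat.choose (d + m - r - r' - 4) (m - r - r' - 1) : ℝ) * (d : ℝ) ^ 3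
          = (d : ℝ) ^ 4 * ((m : ℝ) + 1) *
            (Nat.choose (d + m - r - r' - 4) (m - r - r' - 1) : ℝ) := by ring
        _ ≤ 512 * (m : ℝ) ^ 5 * (Nat.choose (d + m) (m + 1) : ℝ) := hcast
    · rw [if_neg h, mul_zero]
      positivity
  calc ∑ r ∈ Finset.Icc 1 m, ∑ r' ∈ Finset.Icc 1 m,
        ((Nat.choose (d + m) (m + 1) : ℝ))⁻¹ * (d : ℝ) * ((m : ℝ) + 1) *
          (if r + r' + 1 ≤ m then (Nat.choose (d + m - r - r' - 4) (m - r - r' - 1) : ℝ)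
            else 0)
      ≤ ∑ r ∈ Finset.Icc 1 m, ∑ r' ∈ Finset.Icc 1 m, 512 * (m : ℝ) ^ 5 / (d : ℝ) ^ 3 := by
        refine Finset.sum_le_sum fun r hr => Finset.sum_le_sum fun r' hr' => ?_
        exact hterm r hr r' hr'
    _ = (m : ℝ) * ((m : ℝ) * (512 * (m : ℝ) ^ 5 / (d : ℝ) ^ 3)) := by
        simp [Finset.sum_const, Nat.card_Icc, mul_comm]
    _ = 512 * (m : ℝ) ^ 7 / (d : ℝ) ^ 3 := by ring
end
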